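/- Rubik Table theorem for 2D grids: any bijective assignment of the m1·m2 labels to the cells of an m1 × m2 grid can be transformed into the row-major configuration by a sequence consisting of m1 row shuffles (one per row), followed by m2 column shuffles (one per column), followed by m1 row shuffles, where a row (resp. column) shuffle applies an arbitrary permutation to the entries of a single row (resp. column). -/
import Mathlib


/-- A cell of an `m₁ × m₂` grid. -/
abbrev Cell (m₁ m₂ : ℕ) := Fin m₁ × Fin m₂

/-- `f'` is obtained from `f` by a row shuffle of row `r`: the contents of row `r` are
permuted arbitrarily within row `r`, and all other tiles are untouched. -/
def RowShuffle (m₁ m₂ : ℕ) (f f' : Fin (m₁ * m₂) → Cell m₁ m₂) (r : Fin m₁) : Prop :=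
  Function.Bijective f' ∧
    ∀ l, ((f l).1 ≠ r → f' l = f l) ∧ ((f l).1 = r → (f' l).1 = r)

/-- `f'` is obtained from `f` by a column shuffle of column `q`. -/
def ColShuffle (m₁ m₂ : ℕ) (f f' : Fin (m₁ * m₂) → Cell m₁ m₂) (q : Fin m₂) : Prop :=
  Function.Bijective f' ∧
    ∀ l, ((f l).2 ≠ q → f' l = f l) ∧ ((f l).2 = q → (f' l).2 = q)

/-- A phase of `m₁` row shuffles, one for each row, in order. -/
def RowPhase (m₁ m₂ : ℕ) (f f' : Fin (m₁ * m₂) → Cell m₁ m₂) : Prop :=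
  ∃ g : ℕ → Fin (m₁ * m₂) → Cell m₁ m₂, g 0 = f ∧ g m₁ = f' ∧
    ∀ r : Fin m₁, RowShuffle m₁ m₂ (g r.val) (g (r.val + 1)) r

/-- A phase of `m₂` column shuffles, one for each column, in order. -/
def ColPhase (m₁ m₂ : ℕ) (f f' : Fin (m₁ * m₂) → Cell m₁ m₂) : Prop :=
  ∃ g : ℕ → Fin (m₁ * m₂) → Cell m₁ m₂, g 0 = f ∧ g m₂ = f' ∧
    ∀ q : Fin m₂, ColShuffle m₁ m₂ (g q.val) (g (q.val + 1)) q

/-- The row-major configuration: label `i * m₂ + j` occupies cell `(i, j)`. -/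
def rowMajor (m₁ m₂ : ℕ) : Fin (m₁ * m₂) → Cell m₁ m₂ :=
  fun l => (@finProdFinEquiv m₁ m₂).symm l

open Finset

lemma card_cell (m₁ m₂ : ℕ) :
    Fintype.card (Fin (m₁ * m₂)) = Fintype.card (Cell m₁ m₂) := by simp

lemma rowPhase_of (m₁ m₂ : ℕ) (f f' : Fin (m₁ * m₂) → Cell m₁ m₂)
    (hf : Function.Bijective f) (hf' : Function.Bijective f')
    (h : ∀ l, (f' l).1 = (f l).1) : RowPhase m₁ m₂ f f' := by
  set g : ℕ → Fin (m₁ * m₂) → Cell m₁ m₂ :=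
    fun k l => if (f l).1.val < k then f' l else f l with hg
  have hrow : ∀ k l, (g k l).1 = (f l).1 := by
    intro k l; simp only [hg]; split <;> simp [h]
  have hbij : ∀ k, Function.Bijective (g k) := by
    intro k
    rw [Fintype.bijective_iff_injective_and_card _]
    refine ⟨?_, card_cell m₁ m₂⟩
    intro l l' hll
    have h1 : (f l).1 = (f l').1 := by
      have := congrArg Prod.fst hll
      rwa [hrow, hrow] at this
    simp only [hg, h1] at hll
    split at hll
    · exact hf'.injective hll
    · exact hf.injective hll
  refine ⟨g, ?_, ?_, ?_⟩
  · funext l; simp [hg]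
  · funext l; simp [hg, (f l).1.isLt]
  · intro r
    refine ⟨hbij _, fun l => ⟨?_, ?_⟩⟩
    · intro hne
      rw [hrow] at hne
      have hnv : (f l).1.val ≠ r.val := fun hc => hne (Fin.ext hc)
      rcases lt_or_gt_of_ne hnv with hlt | hgt
      · show (if (f l).1.val < r.val + 1 then f' l else f l)
            = (if (f l).1.val < r.val then f' l else f l)
        rw [if_pos hlt, if_pos (Nat.lt_succ_of_lt hlt)]
      · show (if (f l).1.val < r.val + 1 then f' l else f l)
            = (if (f l).1.val < r.val then f' l else f l)
        rw [if_neg (Nat.not_lt.mpr (Nat.succ_le_of_lt hgt)), if_neg (Nat.not_lt.mpr (Nat.le_of_lt hgt))]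
    · intro he
      rw [hrow] at he ⊢
      exact he

lemma colPhase_of (m₁ m₂ : ℕ) (f f' : Fin (m₁ * m₂) → Cell m₁ m₂)
    (hf : Function.Bijective f) (hf' : Function.Bijective f')
    (h : ∀ l, (f' l).2 = (f l).2) : ColPhase m₁ m₂ f f' := by
  set g : ℕ → Fin (m₁ * m₂) → Cell m₁ m₂ :=
    fun k l => if (f l).2.val < k then f' l else f l with hg
  have hcol : ∀ k l, (g k l).2 = (f l).2 := by
    intro k l; simp only [hg]; split <;> simp [h]
  have hbij : ∀ k, Function.Bijective (g k) := by
    intro k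
    rw [Fintype.bijective_iff_injective_and_card _]
    refine ⟨?_, card_cell m₁ m₂⟩
    intro l l' hll
    have h1 : (f l).2 = (f l').2 := by
      have := congrArg Prod.snd hll
      rwa [hcol, hcol] at this
    simp only [hg, h1] at hll
    split at hll
    · exact hf'.injective hll
    · exact hf.injective hll
  refine ⟨g, ?_, ?_, ?_⟩
  · funext l; simp [hg]
  · funext l; simp [hg, (f l).2.isLt]
  · intro q
    refine ⟨hbij _, fun l => ⟨?_, ?_⟩⟩
    · intro hne
      rw [hcol] at hne
      have hnv : (f l).2.val ≠ q.val := fun hc => hne (Fin.ext hc)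
      rcases lt_or_gt_of_ne hnv with hlt | hgt
      · show (if (f l).2.val < q.val + 1 then f' l else f l)
            = (if (f l).2.val < q.val then f' l else f l)
        rw [if_pos hlt, if_pos (Nat.lt_succ_of_lt hlt)]
      · show (if (f l).2.val < q.val + 1 then f' l else f l)
            = (if (f l).2.val < q.val then f' l else f l)
        rw [if_neg (Nat.not_lt.mpr (Nat.succ_le_of_lt hgt)), if_neg (Nat.not_lt.mpr (Nat.le_of_lt hgt))]
    · intro he
      rw [hcol] at he ⊢
      exact he

lemma exists_perm_comp {α β : Type*} [Fintype α] [DecidableEq α] [DecidableEq β]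
    (A B : α → β)
    (h : ∀ d, (Finset.univ.filter (fun x => A x = d)).card
            = (Finset.univ.filter (fun x => B x = d)).card) :
    ∃ ρ : Equiv.Perm α, ∀ j, B (ρ j) = A j := by
  classical
  have hcard : ∀ d, Fintype.card {x // A x = d} = Fintype.card {x // B x = d} := by
    intro d; rw [Fintype.card_subtype, Fintype.card_subtype]; exact h d
  let ρ : α ≃ α :=
    (Equiv.sigmaFiberEquiv A).symm.trans
      ((Equiv.sigmaCongrRight fun d => Fintype.equivOfCardEq (hcard d)).trans
        (Equiv.sigmaFiberEquiv B))
  refine ⟨ρ, fun j => ?_⟩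
  have h1 : (Equiv.sigmaFiberEquiv A).symm j = ⟨A j, ⟨j, rfl⟩⟩ := by
    apply (Equiv.sigmaFiberEquiv A).injective
    simp [Equiv.sigmaFiberEquiv]
  show B ((Equiv.sigmaFiberEquiv B)
    ((Equiv.sigmaCongrRight fun d => Fintype.equivOfCardEq (hcard d))
      ((Equiv.sigmaFiberEquiv A).symm j))) = A j
  rw [h1]
  exact ((Fintype.equivOfCardEq (hcard (A j))) ⟨j, rfl⟩).2

lemma decomp (n : ℕ) : ∀ (k : ℕ) (N : Fin n → Fin n → ℕ),
    (∀ r, ∑ d, N r d = k) → (∀ d, ∑ r, N r d = k) →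
    ∃ σ : Fin k → Equiv.Perm (Fin n),
      ∀ r d, N r d = (univ.filter (fun j => σ j r = d)).card := by
  intro k
  induction k with
  | zero =>
    intro N hrow _
    refine ⟨finZeroElim, fun r d => ?_⟩
    have h0 : N r d = 0 :=
      (Finset.sum_eq_zero_iff.mp (hrow r)) d (mem_univ d)
    simp [h0]
  | succ k ih =>
    intro N hrow hcol
    set t : Fin n → Finset (Fin n) := fun r => univ.filter (fun d => N r d ≠ 0) with ht
    have hall : ∀ S : Finset (Fin n), S.card ≤ (S.biUnion t).card := by
      intro S
      have key : (k+1) * S.card ≤ (k+1) * (S.biUnion t).card := by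
        calc (k+1) * S.card = ∑ r ∈ S, (k+1) := by rw [sum_const, smul_eq_mul, mul_comm]
        _ = ∑ r ∈ S, ∑ d, N r d := by exact sum_congr rfl fun r _ => (hrow r).symm
        _ = ∑ r ∈ S, ∑ d ∈ S.biUnion t, N r d := by
            refine sum_congr rfl fun r hr => ?_
            refine (sum_subset (subset_univ _) fun d _ hd => ?_).symm
            by_contra hne
            exact hd (mem_biUnion.mpr ⟨r, hr, by simp [ht, hne]⟩)
        _ ≤ ∑ r, ∑ d ∈ S.biUnion t, N r d := sum_le_sum_of_subset (subset_univ S)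
        _ = ∑ d ∈ S.biUnion t, ∑ r, N r d := sum_comm
        _ = ∑ d ∈ S.biUnion t, (k+1) := sum_congr rfl fun d _ => hcol d
        _ = (k+1) * (S.biUnion t).card := by rw [sum_const, smul_eq_mul, mul_comm]
      exact Nat.le_of_mul_le_mul_left key (Nat.succ_pos k)
    obtain ⟨π', hinj, hmem⟩ := (Finset.all_card_le_biUnion_card_iff_exists_injective t).mp hall
    have hπ' : ∀ r, N r (π' r) ≠ 0 := by
      intro r; have := hmem r; simp [ht] at this; exact this
    let π : Equiv.Perm (Fin n) := Equiv.ofBijective π' (Finite.injective_iff_bijective.mp hinj)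
    have hπ : ∀ r, N r (π r) ≠ 0 := hπ'
    set N' : Fin n → Fin n → ℕ := fun r d => N r d - (if π r = d then 1 else 0) with hN'
    have hsplit : ∀ r d, N r d = N' r d + (if π r = d then 1 else 0) := by
      intro r d
      simp only [hN']
      rcases eq_or_ne (π r) d with he | he
      · simp only [if_pos he]
        have : 1 ≤ N r d := Nat.one_le_iff_ne_zero.mpr (he ▸ hπ r)
        omega
      · simp [he]
    have hrow' : ∀ r, ∑ d, N' r d = k := by
      intro r
      have h1 : ∑ d, (if π r = d then 1 else 0) = 1 := by simp
      have h2 : (∑ d, N' r d) + 1 = k + 1 := by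
        calc (∑ d, N' r d) + 1 = (∑ d, N' r d) + ∑ d, (if π r = d then 1 else 0) := by rw [h1]
        _ = ∑ d, (N' r d + if π r = d then 1 else 0) := sum_add_distrib.symm
        _ = ∑ d, N r d := sum_congr rfl fun d _ => (hsplit r d).symm
        _ = k + 1 := hrow r
      omega
    have hcol' : ∀ d, ∑ r, N' r d = k := by
      intro d
      have h1 : ∑ r, (if π r = d then 1 else 0) = 1 := by
        simp [Equiv.apply_eq_iff_eq_symm_apply]
      have h2 : (∑ r, N' r d) + 1 = k + 1 := by
        calc (∑ r, N' r d) + 1 = (∑ r, N' r d) + ∑ r, (if π r = d then 1 else 0) := by rw [h1]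
        _ = ∑ r, (N' r d + if π r = d then 1 else 0) := sum_add_distrib.symm
        _ = ∑ r, N r d := sum_congr rfl fun r _ => (hsplit r d).symm
        _ = k + 1 := hcol d
      omega
    obtain ⟨σ', hσ'⟩ := ih N' hrow' hcol'
    refine ⟨Fin.cons π σ', fun r d => ?_⟩
    rw [card_filter, Fin.sum_univ_succ]
    simp only [Fin.cons_zero, Fin.cons_succ]
    rw [← card_filter, ← hσ' r d, hsplit r d]
    omega

/-- Rubik Table theorem for 2D grids: any bijective configuration of
`m₁ * m₂` labels on the grid can be brought to the row-major configuration by `m₁` row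
shuffles, then `m₂` column shuffles, then `m₁` row shuffles. -/
theorem rubik_table_2d (m₁ m₂ : ℕ) (f : Fin (m₁ * m₂) → Cell m₁ m₂)
    (hf : Function.Bijective f) :
    ∃ f₁ f₂ : Fin (m₁ * m₂) → Cell m₁ m₂,
      RowPhase m₁ m₂ f f₁ ∧ ColPhase m₁ m₂ f₁ f₂ ∧ RowPhase m₁ m₂ f₂ (rowMajor m₁ m₂) := by
  set dest : Fin (m₁ * m₂) → Fin m₁ := fun l => ((@finProdFinEquiv m₁ m₂).symm l).1 with hdest
  obtain ⟨e, he⟩ : ∃ e : Fin (m₁ * m₂) ≃ Cell m₁ m₂, ⇑e = f :=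
    ⟨Equiv.ofBijective f hf, rfl⟩
  set N : Fin m₁ → Fin m₁ → ℕ :=
    fun r d => (univ.filter (fun j : Fin m₂ => dest (e.symm (r, j)) = d)).card with hN
  -- row sums
  have hrowsum : ∀ r, ∑ d, N r d = m₂ := by
    intro r
    have := Finset.card_eq_sum_card_fiberwise
      (f := fun j : Fin m₂ => dest (e.symm (r, j))) (s := univ) (t := univ)
      (fun x _ => mem_univ _)
    simpa using this.symm
  -- column sums
  have hdestcard : ∀ d : Fin m₁,
      (univ.filter (fun l : Fin (m₁ * m₂) => dest l = d)).card = m₂ := by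
    intro d
    rw [card_filter]
    rw [Fintype.sum_equiv (@finProdFinEquiv m₁ m₂).symm _
      (fun c : Cell m₁ m₂ => if c.1 = d then 1 else 0) (fun l => by simp [hdest])]
    rw [Fintype.sum_prod_type]
    simp [apply_ite Finset.card]
  have hcolsum : ∀ d, ∑ r, N r d = m₂ := by
    intro d
    have h1 : ∀ r : Fin m₁, N r d = ∑ j : Fin m₂, if dest (e.symm (r, j)) = d then 1 else 0 := by
      intro r; rw [hN]; exact card_filter _ _
    calc ∑ r, N r d = ∑ r, ∑ j : Fin m₂, (if dest (e.symm (r, j)) = d then 1 else 0) :=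
          sum_congr rfl fun r _ => h1 r
    _ = ∑ c : Cell m₁ m₂, (if dest (e.symm c) = d then 1 else 0) := by
          rw [Fintype.sum_prod_type]
    _ = ∑ l : Fin (m₁ * m₂), (if dest l = d then 1 else 0) := by
          exact Fintype.sum_equiv e.symm _ _ (fun c => rfl)
    _ = m₂ := by rw [← card_filter]; exact hdestcard d
  obtain ⟨τ, hτ⟩ := decomp m₁ m₂ N hrowsum hcolsum
  -- per-row rearrangement permutations
  have hfiber : ∀ r : Fin m₁, ∃ ρ : Equiv.Perm (Fin m₂),
      ∀ j, τ (ρ j) r = dest (e.symm (r, j)) := by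
    intro r
    apply exists_perm_comp (fun j => dest (e.symm (r, j))) (fun c => τ c r)
    intro d
    rw [← hτ r d, hN]
  choose ρ hρ using hfiber
  set f₁ : Fin (m₁ * m₂) → Cell m₁ m₂ :=
    fun l => ((f l).1, ρ (f l).1 (f l).2) with hf₁
  have hf₁row : ∀ l, (f₁ l).1 = (f l).1 := fun l => rfl
  have hf₁bij : Function.Bijective f₁ := by
    rw [Fintype.bijective_iff_injective_and_card _]
    refine ⟨?_, card_cell m₁ m₂⟩
    intro l l' hll
    simp only [hf₁, Prod.mk.injEq] at hll
    obtain ⟨h1, h2⟩ := hll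
    rw [h1] at h2
    have h2' := (ρ (f l').1).injective h2
    exact hf.injective (Prod.ext h1 h2')
  have hkey : ∀ l, dest l = τ ((f₁ l).2) ((f l).1) := by
    intro l
    have : e.symm ((f l).1, (f l).2) = l := by
      have h0 : ((f l).1, (f l).2) = e l := by rw [he]
      rw [h0]; exact e.symm_apply_apply l
    have h2 := hρ (f l).1 (f l).2
    rw [this] at h2
    exact h2.symm
  set f₂ : Fin (m₁ * m₂) → Cell m₁ m₂ := fun l => (dest l, (f₁ l).2) with hf₂
  have hf₂bij : Function.Bijective f₂ := by
    rw [Fintype.bijective_iff_injective_and_card _]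
    refine ⟨?_, card_cell m₁ m₂⟩
    intro l l' hll
    have h0f := congrArg (Prod.fst : Cell m₁ m₂ → Fin m₁) hll
    have h0s := congrArg (Prod.snd : Cell m₁ m₂ → Fin m₂) hll
    simp only [hf₂] at h0f h0s
    have h1 : dest l = dest l' := h0f
    have h2 : (f₁ l).2 = (f₁ l').2 := h0s
    have hd := hkey l
    rw [h1, h2] at hd
    rw [hkey l'] at hd
    have hr : (f l).1 = (f l').1 := ((τ ((f₁ l').2)).injective hd).symm
    have : f₁ l = f₁ l' := Prod.ext (by rw [hf₁row, hf₁row, hr]) h2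
    exact hf₁bij.injective this
  have hrm : Function.Bijective (rowMajor m₁ m₂) := by
    have : rowMajor m₁ m₂ = ⇑(@finProdFinEquiv m₁ m₂).symm := rfl
    rw [this]; exact (Equiv.bijective _)
  refine ⟨f₁, f₂, ?_, ?_, ?_⟩
  · exact rowPhase_of m₁ m₂ f f₁ hf hf₁bij hf₁row
  · exact colPhase_of m₁ m₂ f₁ f₂ hf₁bij hf₂bij (fun l => rfl)
  · exact rowPhase_of m₁ m₂ f₂ (rowMajor m₁ m₂) hf₂bij hrm (fun l => rfl)
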